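/- Let 0<β<1, 0≤λ<1, z0∈D, and let γ: z=z(t), 0≤t≤1, be a C¹ curve in D with z(0)=0 and z(1)=z0. Then V(z0,λ,β) is contained in the closed disk {w∈ℂ : |w - C(λ,γ,β)| ≤ R(λ,γ,β)}, where C(λ,γ,β)=∫_0^1 c(z(t),λ,β) z'(t) dt and R(λ,γ,β)=∫_0^1 r(z(t),λ,β) |z'(t)| dt. -/

import Mathlib

open Complex Set MeasureTheory Metric intervalIntegral

noncomputable section

/-- The open unit disk in the complex plane. -/
def unitDisk : Set ℂ := {z : ℂ | ‖z‖ < 1}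

/-- Integral of `g` along the segment from `0` to `z0`:
`∫_0^{z0} g(ξ) dξ = ∫_0^1 z0 · g(t z0) dt`. -/
def segInt (g : ℂ → ℂ) (z0 : ℂ) : ℂ :=
  ∫ t in (0:ℝ)..1, z0 * g ((t : ℂ) * z0)

/-- The branch of `log f'` vanishing at the origin, evaluated at `z0`:
`log f'(z0) = ∫_0^{z0} f''(ξ)/f'(ξ) dξ`. -/
def logDerivAt (f : ℂ → ℂ) (z0 : ℂ) : ℂ :=
  segInt (fun ξ => deriv (deriv f) ξ / deriv f ξ) z0

/-- The class `F(λ,β)`: analytic `f` on the unit disk with `f(0)=0`, `f'(0)=1`,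
`f''(0)=2λ(1-β)`, nonvanishing derivative, and `Re(1 + z f''(z)/f'(z)) > β`. -/
def IsInF (lam beta : ℝ) (f : ℂ → ℂ) : Prop :=
  DifferentiableOn ℂ f unitDisk ∧ f 0 = 0 ∧ deriv f 0 = 1 ∧
    deriv (deriv f) 0 = 2 * (lam : ℂ) * (1 - (beta : ℂ)) ∧
    (∀ z ∈ unitDisk, deriv f z ≠ 0) ∧
    (∀ z ∈ unitDisk, beta < (1 + z * deriv (deriv f) z / deriv f z).re)

/-- The region of variability `V(z0,λ,β) = {log f'(z0) : f ∈ F(λ,β)}`. -/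
def V (z0 : ℂ) (lam beta : ℝ) : Set ℂ :=
  {w : ℂ | ∃ f : ℂ → ℂ, IsInF lam beta f ∧ logDerivAt f z0 = w}

/-- The center function `c(z,λ,β)`. -/
def cval (z : ℂ) (lam beta : ℝ) : ℂ :=
  ((2 * (1 - beta) : ℝ) : ℂ) *
    (((lam * (1 - ‖z‖ ^ 2) : ℝ) : ℂ) +
      ((‖z‖ ^ 2 - lam ^ 2 : ℝ) : ℂ) * (starRingEnd ℂ) z) /
    (((1 - ‖z‖ ^ 2) * (1 - 2 * lam * z.re + ‖z‖ ^ 2) : ℝ) : ℂ)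

/-- The radius function `r(z,λ,β)`. -/
def rval (z : ℂ) (lam beta : ℝ) : ℝ :=
  2 * (1 - beta) * (1 - lam ^ 2) * ‖z‖ /
    ((1 - ‖z‖ ^ 2) * (1 - 2 * lam * z.re + ‖z‖ ^ 2))

lemma unitDisk_eq : unitDisk = Metric.ball (0:ℂ) 1 := by
  ext z
  simp [unitDisk, mem_ball_zero_iff]


lemma denom_pos (lam : ℝ) (hl0 : 0 ≤ lam) (hl1 : lam < 1) (ζ : ℂ)
    (hζ : ‖ζ‖ < 1) :
    0 < (1 - ‖ζ‖ ^ 2) * (1 - 2 * lam * ζ.re + ‖ζ‖ ^ 2) := by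
  have h0 : 0 ≤ ‖ζ‖ := norm_nonneg ζ
  have h2 : |ζ.re| ≤ ‖ζ‖ := Complex.abs_re_le_norm ζ
  have h2' : ζ.re ≤ ‖ζ‖ := (abs_le.mp h2).2
  apply mul_pos
  · nlinarith
  · nlinarith [sq_nonneg (1 - ‖ζ‖), mul_nonneg (sub_nonneg.mpr hl1.le) h0,
      mul_le_mul_of_nonneg_left h2' (by linarith : (0:ℝ) ≤ 2 * lam)]


lemma key_ineq (ζ u d c : ℂ) (hu : ‖u‖ ≤ ‖ζ‖)
    (hD : 0 ≤ Complex.normSq d - Complex.normSq c * Complex.normSq ζ) :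
    ‖(starRingEnd ℂ) d * u + (starRingEnd ℂ) c * (ζ * (starRingEnd ℂ) ζ)‖ ≤ ‖ζ‖ * ‖d + c * u‖ := by
  have e1 : ∀ Z : ℂ, ‖Z‖ ^ 2 = Complex.normSq Z := fun Z => by
    rw [Complex.sq_norm]
  have hu2 : Complex.normSq u ≤ Complex.normSq ζ := by
    rw [← e1, ← e1]; exact pow_le_pow_left₀ (norm_nonneg _) hu 2
  have hid : Complex.normSq ζ * Complex.normSq (d + c * u)
      - Complex.normSq ((starRingEnd ℂ) d * u + (starRingEnd ℂ) c * (ζ * (starRingEnd ℂ) ζ))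
      = (Complex.normSq ζ - Complex.normSq u)
        * (Complex.normSq d - Complex.normSq c * Complex.normSq ζ) := by
    have : ((Complex.normSq ζ * Complex.normSq (d + c * u)
      - Complex.normSq ((starRingEnd ℂ) d * u + (starRingEnd ℂ) c * (ζ * (starRingEnd ℂ) ζ)) : ℝ) : ℂ)
      = (((Complex.normSq ζ - Complex.normSq u)
        * (Complex.normSq d - Complex.normSq c * Complex.normSq ζ) : ℝ) : ℂ) := by
      push_cast
      simp only [← Complex.mul_conj]
      simp only [map_add, map_mul, Complex.conj_conj]
      ring
    exact_mod_cast this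
  have hsq : ‖(starRingEnd ℂ) d * u + (starRingEnd ℂ) c * (ζ * (starRingEnd ℂ) ζ)‖ ^ 2
      ≤ (‖ζ‖ * ‖d + c * u‖) ^ 2 := by
    rw [mul_pow, e1, e1, e1]
    nlinarith [mul_nonneg (sub_nonneg.mpr hu2) hD]
  nlinarith [norm_nonneg ((starRingEnd ℂ) d * u + (starRingEnd ℂ) c * (ζ * (starRingEnd ℂ) ζ)),
    mul_nonneg (norm_nonneg ζ) (norm_nonneg (d + c * u))]

set_option maxHeartbeats 1000000 in
lemma mobius_disk_bound (beta lam : ℝ) (hb0 : 0 < beta) (hb1 : beta < 1)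
    (hl0 : 0 ≤ lam) (hl1 : lam < 1) (ζ u W T : ℂ)
    (hζ : ‖ζ‖ < 1) (hu : ‖u‖ ≤ ‖ζ‖) (hW : ‖W‖ < 1)
    (hrel : W * (1 + (lam:ℂ) * u) = u + (lam:ℂ))
    (hT : T * (1 - ζ * W) = 2 * (1 - (beta:ℂ)) * W) :
    ‖T - cval ζ lam beta‖ ≤ rval ζ lam beta := by
  have hu1 : ‖u‖ < 1 := lt_of_le_of_lt hu hζ
  have h1u : (1 + (lam:ℂ) * u) ≠ 0 := by
    intro H
    have hn : ‖(lam:ℂ) * u‖ < 1 := by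
      rw [norm_mul, Complex.norm_real, Real.norm_eq_abs, _root_.abs_of_nonneg hl0]
      nlinarith [norm_nonneg u]
    have h2 : (lam:ℂ) * u = -1 := by linear_combination H
    rw [h2] at hn; simp at hn
  have hζW : (1 - ζ * W) ≠ 0 := by
    intro H
    have hn : ‖ζ * W‖ < 1 := by
      rw [norm_mul]; nlinarith [norm_nonneg ζ, norm_nonneg W]
    have h2 : ζ * W = 1 := by linear_combination -H
    rw [h2] at hn; simp at hn
  have hfactor : (1 - (lam:ℂ) * ζ) + ((lam:ℂ) - ζ) * u = (1 - ζ * W) * (1 + (lam:ℂ) * u) := by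
    linear_combination ζ * hrel
  have hdc : (1 - (lam:ℂ) * ζ) + ((lam:ℂ) - ζ) * u ≠ 0 := by
    rw [hfactor]; exact mul_ne_zero hζW h1u
  have hABpos := denom_pos lam hl0 hl1 ζ (by exact hζ)
  have hABne : (((1 - ‖ζ‖ ^ 2) * (1 - 2 * lam * ζ.re + ‖ζ‖ ^ 2) : ℝ) : ℂ) ≠ 0 :=
    Complex.ofReal_ne_zero.mpr hABpos.ne'
  have h2 : ((‖ζ‖ : ℝ) : ℂ) ^ 2 = ζ * (starRingEnd ℂ) ζ := by
    rw [← Complex.ofReal_pow, Complex.sq_norm, Complex.mul_conj]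
  have hre : ((ζ.re : ℝ) : ℂ) = (ζ + (starRingEnd ℂ) ζ) / 2 := by
    rw [Complex.add_conj]; push_cast; ring
  have hden : (((1 - ‖ζ‖ ^ 2) * (1 - 2 * lam * ζ.re + ‖ζ‖ ^ 2) : ℝ) : ℂ)
      = (1 - (lam:ℂ) * ζ) * (1 - (lam:ℂ) * (starRingEnd ℂ) ζ)
        - ((lam:ℂ) - ζ) * ((lam:ℂ) - (starRingEnd ℂ) ζ) * (ζ * (starRingEnd ℂ) ζ) := by
    push_cast
    rw [h2, hre]
    ring
  have hTdc : T * ((1 - (lam:ℂ) * ζ) + ((lam:ℂ) - ζ) * u) = 2 * (1 - (beta:ℂ)) * (u + (lam:ℂ)) := by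
    rw [hfactor]
    linear_combination (1 + (lam:ℂ) * u) * hT + 2 * (1 - (beta:ℂ)) * hrel
  have hdiff : T - cval ζ lam beta
      = ((2 * (1 - beta) * (1 - lam ^ 2) : ℝ) : ℂ)
          * ((1 - (lam:ℂ) * (starRingEnd ℂ) ζ) * u
              + ((lam:ℂ) - (starRingEnd ℂ) ζ) * (ζ * (starRingEnd ℂ) ζ))
        / ((((1 - ‖ζ‖ ^ 2) * (1 - 2 * lam * ζ.re + ‖ζ‖ ^ 2) : ℝ) : ℂ)
            * ((1 - (lam:ℂ) * ζ) + ((lam:ℂ) - ζ) * u)) := by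
    rw [eq_div_iff (mul_ne_zero hABne hdc)]
    have hstep : ∀ a b c : ℂ, b ≠ 0 → a / b * (b * c) = a * c := by
      intro a b c hb; field_simp
    rw [sub_mul, cval, hstep _ _ _ hABne]
    have expand : (((lam * (1 - ‖ζ‖ ^ 2) : ℝ) : ℂ)
        + ((‖ζ‖ ^ 2 - lam ^ 2 : ℝ) : ℂ) * (starRingEnd ℂ) ζ)
        = (lam:ℂ) * (1 - ζ * (starRingEnd ℂ) ζ)
          + (ζ * (starRingEnd ℂ) ζ - (lam:ℂ) ^ 2) * (starRingEnd ℂ) ζ := by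
      push_cast
      rw [h2]
    rw [expand, hden]
    push_cast
    linear_combination (((1 - (lam:ℂ) * ζ) * (1 - (lam:ℂ) * (starRingEnd ℂ) ζ)
        - ((lam:ℂ) - ζ) * ((lam:ℂ) - (starRingEnd ℂ) ζ) * (ζ * (starRingEnd ℂ) ζ))) * hTdc
  rw [hdiff, rval]
  have hABpos' : 0 < (1 - ‖ζ‖ ^ 2) * (1 - 2 * lam * ζ.re + ‖ζ‖ ^ 2) := by
    exact hABpos
  have h1l : (0:ℝ) ≤ 1 - lam ^ 2 := by nlinarith
  have hC : (0:ℝ) ≤ 2 * (1 - beta) * (1 - lam ^ 2) := by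
    apply mul_nonneg (by linarith) h1l
  have habs2 : ‖ζ‖ ^ 2 = ζ.re ^ 2 + ζ.im ^ 2 := by
    rw [Complex.sq_norm, Complex.normSq_apply]; ring
  have hkey := key_ineq ζ u (1 - (lam:ℂ) * ζ) ((lam:ℂ) - ζ) hu (by
    have heq : Complex.normSq (1 - (lam:ℂ) * ζ) - Complex.normSq ((lam:ℂ) - ζ) * Complex.normSq ζ
        = (1 - ‖ζ‖ ^ 2) * (1 - 2 * lam * ζ.re + ‖ζ‖ ^ 2) := by
      rw [habs2]
      simp only [Complex.normSq_apply, Complex.sub_re, Complex.sub_im, Complex.mul_re,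
        Complex.mul_im, Complex.ofReal_re, Complex.ofReal_im, Complex.one_re, Complex.one_im]
      ring
    rw [heq]; exact hABpos.le)
  have hconj : (starRingEnd ℂ) (1 - (lam:ℂ) * ζ) = 1 - (lam:ℂ) * (starRingEnd ℂ) ζ := by
    simp [map_sub, map_mul, Complex.conj_ofReal]
  have hconj2 : (starRingEnd ℂ) ((lam:ℂ) - ζ) = (lam:ℂ) - (starRingEnd ℂ) ζ := by
    simp [map_sub, Complex.conj_ofReal]
  rw [hconj, hconj2] at hkey
  rw [norm_div, norm_mul, norm_mul, Complex.norm_real, Complex.norm_real,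
    Real.norm_eq_abs, Real.norm_eq_abs,
    _root_.abs_of_nonneg hC, _root_.abs_of_nonneg hABpos'.le]
  have hY : (0:ℝ) < ‖(1 - (lam:ℂ) * ζ) + ((lam:ℂ) - ζ) * u‖ := norm_pos_iff.mpr hdc
  rw [div_le_div_iff₀ (mul_pos hABpos' hY) hABpos']
  nlinarith [mul_le_mul_of_nonneg_left hkey (mul_nonneg hC hABpos'.le),
    norm_nonneg ((1 - (lam:ℂ) * (starRingEnd ℂ) ζ) * u + ((lam:ℂ) - (starRingEnd ℂ) ζ) * (ζ * (starRingEnd ℂ) ζ))]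


lemma hasDerivAt_segInt {h : ℂ → ℂ} (hh : DifferentiableOn ℂ h (Metric.ball (0:ℂ) 1))
    {w : ℂ} (hw : w ∈ Metric.ball (0:ℂ) 1) : HasDerivAt (segInt h) (h w) w := by
  have hw1 : ‖w‖ < 1 := mem_ball_zero_iff.mp hw
  set r : ℝ := (1 + ‖w‖) / 2 with hr
  have hr0 : 0 < r := by positivity
  have hwr : ‖w‖ < r := by rw [hr]; linarith
  have hr1 : r < 1 := by rw [hr]; linarith
  have hK : Metric.closedBall (0:ℂ) r ⊆ Metric.ball (0:ℂ) 1 := by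
    intro x hx
    rw [mem_closedBall_zero_iff] at hx
    exact mem_ball_zero_iff.mpr (lt_of_le_of_lt hx hr1)
  have hh' : DifferentiableOn ℂ (deriv h) (Metric.ball (0:ℂ) 1) :=
    ((hh.analyticOnNhd isOpen_ball).deriv).differentiableOn
  have hco : ContinuousOn h (Metric.closedBall (0:ℂ) r) := hh.continuousOn.mono hK
  have hco' : ContinuousOn (deriv h) (Metric.closedBall (0:ℂ) r) := hh'.continuousOn.mono hK
  obtain ⟨M₁, hM₁⟩ := (isCompact_closedBall (0:ℂ) r).exists_bound_of_continuousOn hco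
  obtain ⟨M₂, hM₂⟩ := (isCompact_closedBall (0:ℂ) r).exists_bound_of_continuousOn hco'
  have hM₁0 : 0 ≤ M₁ := le_trans (norm_nonneg _) (hM₁ 0 (mem_closedBall_self hr0.le))
  have hM₂0 : 0 ≤ M₂ := le_trans (norm_nonneg _) (hM₂ 0 (mem_closedBall_self hr0.le))
  set ε : ℝ := r - ‖w‖ with hε
  have hε0 : 0 < ε := by rw [hε]; linarith
  have hxr : ∀ x ∈ Metric.ball w ε, ‖x‖ ≤ r := by
    intro x hx
    rw [mem_ball_iff_norm] at hx
    have := norm_sub_norm_le x w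
    linarith
  have hmem' : ∀ x : ℂ, ‖x‖ ≤ r → ∀ t : ℝ, t ∈ Set.Icc (0:ℝ) 1 →
      ((t:ℂ) * x) ∈ Metric.closedBall (0:ℂ) r := by
    intro x hx t ht
    rw [mem_closedBall_zero_iff, norm_mul, Complex.norm_real, Real.norm_eq_abs,
      _root_.abs_of_nonneg ht.1]
    nlinarith [norm_nonneg x, ht.2]
  have hcont : ∀ x : ℂ, ‖x‖ ≤ r → ContinuousOn (fun t : ℝ => x * h ((t:ℂ) * x)) (Set.Icc 0 1) := by
    intro x hx
    apply continuousOn_const.mul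
    apply hco.comp
    · exact (Complex.continuous_ofReal.mul continuous_const).continuousOn
    · exact fun t ht => hmem' x hx t ht
  have hcont' : ∀ x : ℂ, ‖x‖ ≤ r →
      ContinuousOn (fun t : ℝ => h ((t:ℂ) * x) + x * (deriv h ((t:ℂ) * x) * (t:ℂ))) (Set.Icc 0 1) := by
    intro x hx
    have hc1 : ContinuousOn (fun t : ℝ => ((t:ℂ) * x)) (Set.Icc 0 1) :=
      (Complex.continuous_ofReal.mul continuous_const).continuousOn
    exact (hco.comp hc1 (fun t ht => hmem' x hx t ht)).add
      (continuousOn_const.mul ((hco'.comp hc1 (fun t ht => hmem' x hx t ht)).mul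
        Complex.continuous_ofReal.continuousOn))
  have hsub : Set.uIoc (0:ℝ) 1 ⊆ Set.Icc (0:ℝ) 1 := by
    rw [Set.uIoc_of_le zero_le_one]
    exact Set.Ioc_subset_Icc_self
  have key := intervalIntegral.hasDerivAt_integral_of_dominated_loc_of_deriv_le
    (F := fun x (t:ℝ) => x * h ((t:ℂ) * x))
    (F' := fun x (t:ℝ) => h ((t:ℂ) * x) + x * (deriv h ((t:ℂ) * x) * (t:ℂ)))
    (x₀ := w) (a := 0) (b := 1) (bound := fun _ => M₁ + M₂) (μ := volume) (Metric.ball_mem_nhds w hε0)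
    ?_ ?_ ?_ ?_ ?_ ?_
  · have hseg : HasDerivAt (segInt h)
        (∫ t in (0:ℝ)..1, (h ((t:ℂ) * w) + w * (deriv h ((t:ℂ) * w) * (t:ℂ)))) w := key.2
    have hder2 : ∀ t ∈ Set.uIcc (0:ℝ) 1, HasDerivAt (fun s : ℝ => (s:ℂ) * h ((s:ℂ) * w))
        (h ((t:ℂ) * w) + w * (deriv h ((t:ℂ) * w) * (t:ℂ))) t := by
      intro t ht
      rw [Set.uIcc_of_le zero_le_one] at ht
      have hmemt : ((t:ℂ) * w) ∈ Metric.ball (0:ℂ) 1 := hK (hmem' w hwr.le t ht)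
      have hd : DifferentiableAt ℂ h ((t:ℂ) * w) := hh.differentiableAt (isOpen_ball.mem_nhds hmemt)
      have hG : HasDerivAt (fun s : ℂ => s * h (s * w))
          (1 * h ((t:ℂ) * w) + (t:ℂ) * (deriv h ((t:ℂ) * w) * w)) (t:ℂ) := by
        have hinner : HasDerivAt (fun s : ℂ => s * w) w (t:ℂ) := by
          simpa using (hasDerivAt_id ((t:ℂ))).mul_const w
        have hcomp : HasDerivAt (fun s : ℂ => h (s * w)) (deriv h ((t:ℂ) * w) * w) (t:ℂ) :=
          (hd.hasDerivAt).comp (t:ℂ) hinner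
        exact (hasDerivAt_id ((t:ℂ))).mul hcomp
      have heq : h ((t:ℂ) * w) + w * (deriv h ((t:ℂ) * w) * (t:ℂ))
          = 1 * h ((t:ℂ) * w) + (t:ℂ) * (deriv h ((t:ℂ) * w) * w) := by ring
      rw [heq]
      exact hG.comp_ofReal
    have hval : (∫ t in (0:ℝ)..1, (h ((t:ℂ) * w) + w * (deriv h ((t:ℂ) * w) * (t:ℂ))))
        = h w := by
      rw [intervalIntegral.integral_eq_sub_of_hasDerivAt hder2 key.1]
      norm_num
    rwa [hval] at hseg
  · filter_upwards [Metric.ball_mem_nhds w hε0] with x hx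
    exact (((hcont x (hxr x hx)).mono hsub).aestronglyMeasurable measurableSet_uIoc)
  · exact ((hcont w hwr.le).mono (by rw [Set.uIcc_of_le zero_le_one])).intervalIntegrable
  · exact ((hcont' w hwr.le).mono hsub).aestronglyMeasurable measurableSet_uIoc
  · refine ae_of_all _ ?_
    intro t ht x hx
    have htI : t ∈ Set.Icc (0:ℝ) 1 := hsub ht
    have h1 : ((t:ℂ) * x) ∈ Metric.closedBall (0:ℂ) r := hmem' x (hxr x hx) t htI
    have hb1 := hM₁ _ h1
    have hb2 := hM₂ _ h1
    calc ‖h ((t:ℂ) * x) + x * (deriv h ((t:ℂ) * x) * (t:ℂ))‖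
        ≤ ‖h ((t:ℂ) * x)‖ + ‖x‖ * (‖deriv h ((t:ℂ) * x)‖ * ‖(t:ℂ)‖) := by
          refine le_trans (norm_add_le _ _) ?_
          rw [norm_mul, norm_mul]
      _ ≤ M₁ + M₂ := by
          have hxn : ‖x‖ ≤ r := hxr x hx
          have htn : ‖(t:ℂ)‖ ≤ 1 := by
            rw [Complex.norm_real, Real.norm_eq_abs, _root_.abs_of_nonneg htI.1]
            exact htI.2
          have e1 : ‖deriv h ((t:ℂ) * x)‖ * ‖(t:ℂ)‖ ≤ M₂ * 1 :=
            mul_le_mul hb2 htn (norm_nonneg _) hM₂0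
          have e2 : ‖x‖ * (‖deriv h ((t:ℂ) * x)‖ * ‖(t:ℂ)‖) ≤ 1 * (M₂ * 1) :=
            mul_le_mul (hxn.trans hr1.le) e1
              (mul_nonneg (norm_nonneg _) (norm_nonneg _)) one_pos.le
          linarith
  · exact intervalIntegrable_const
  · refine ae_of_all _ ?_
    intro t ht x hx
    have htI : t ∈ Set.Icc (0:ℝ) 1 := hsub ht
    have hmemt : ((t:ℂ) * x) ∈ Metric.ball (0:ℂ) 1 := hK (hmem' x (hxr x hx) t htI)
    have hd : DifferentiableAt ℂ h ((t:ℂ) * x) := hh.differentiableAt (isOpen_ball.mem_nhds hmemt)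
    have hinner : HasDerivAt (fun y : ℂ => (t:ℂ) * y) (t:ℂ) x := by
      simpa using (hasDerivAt_id x).const_mul (t:ℂ)
    have hcomp : HasDerivAt (fun y : ℂ => h ((t:ℂ) * y)) (deriv h ((t:ℂ) * x) * (t:ℂ)) x :=
      (hd.hasDerivAt).comp x hinner
    have := (hasDerivAt_id x).fun_mul hcomp
    simpa using this


lemma integral_curve_eq_segInt {h : ℂ → ℂ} (hh : DifferentiableOn ℂ h (Metric.ball (0:ℂ) 1))
    {z : ℝ → ℂ} (hz : ContDiffOn ℝ 1 z (Set.Icc 0 1))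
    (hmem : ∀ t ∈ Set.Icc (0:ℝ) 1, z t ∈ Metric.ball (0:ℂ) 1) (h0 : z 0 = 0) :
    ∫ t in (0:ℝ)..1, h (z t) * derivWithin z (Set.Icc 0 1) t = segInt h (z 1) := by
  have hF : ∀ x ∈ Metric.ball (0:ℂ) 1, HasDerivAt (segInt h) (h x) x :=
    fun x hx => hasDerivAt_segInt hh hx
  have hFd : DifferentiableOn ℂ (segInt h) (Metric.ball (0:ℂ) 1) :=
    fun x hx => ((hF x hx).differentiableAt).differentiableWithinAt
  have hzc : ContinuousOn z (Set.Icc 0 1) := hz.continuousOn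
  have hGc : ContinuousOn (fun t => segInt h (z t)) (Set.Icc 0 1) :=
    hFd.continuousOn.comp hzc hmem
  have hz' : ContinuousOn (fun t => derivWithin z (Set.Icc 0 1) t) (Set.Icc 0 1) :=
    hz.continuousOn_derivWithin (uniqueDiffOn_Icc one_pos) le_rfl
  have hint : IntervalIntegrable (fun t => h (z t) * derivWithin z (Set.Icc 0 1) t) volume 0 1 := by
    apply ContinuousOn.intervalIntegrable
    rw [Set.uIcc_of_le zero_le_one]
    exact (hh.continuousOn.comp hzc hmem).mul hz'
  have hderiv : ∀ t ∈ Set.Ioo (0:ℝ) 1, HasDerivWithinAt (fun t => segInt h (z t))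
      (h (z t) * derivWithin z (Set.Icc 0 1) t) (Set.Ioi t) t := by
    intro t ht
    have htI : t ∈ Set.Icc (0:ℝ) 1 := Set.Ioo_subset_Icc_self ht
    have hzt : HasDerivAt z (derivWithin z (Set.Icc 0 1) t) t :=
      ((hz.differentiableOn one_ne_zero t htI).hasDerivWithinAt).hasDerivAt
        (Icc_mem_nhds ht.1 ht.2)
    have hFz := hF (z t) (hmem t htI)
    have := (hFz.hasFDerivAt.restrictScalars ℝ).comp_hasDerivAt t hzt
    have h2 : HasDerivAt (fun t => segInt h (z t))
        (derivWithin z (Set.Icc 0 1) t * h (z t)) t := by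
      convert this using 1
      all_goals rfl
    rw [mul_comm] at h2
    exact h2.hasDerivWithinAt
  have := intervalIntegral.integral_eq_sub_of_hasDeriv_right_of_le zero_le_one hGc hderiv hint
  rw [this, h0]
  have : segInt h 0 = 0 := by
    simp [segInt]
  rw [this, sub_zero]


lemma isInF_diffOn {lam beta : ℝ} {f : ℂ → ℂ} (hf : IsInF lam beta f) :
    DifferentiableOn ℂ (fun ζ => deriv (deriv f) ζ / deriv f ζ) (Metric.ball (0:ℂ) 1) := by
  obtain ⟨hdf, -, -, -, hfne, -⟩ := hf
  rw [unitDisk_eq] at hdf hfne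
  have hd1 : DifferentiableOn ℂ (deriv f) (Metric.ball (0:ℂ) 1) :=
    ((hdf.analyticOnNhd isOpen_ball).deriv).differentiableOn
  have hd2 : DifferentiableOn ℂ (deriv (deriv f)) (Metric.ball (0:ℂ) 1) :=
    ((hd1.analyticOnNhd isOpen_ball).deriv).differentiableOn
  exact hd2.div hd1 hfne


lemma key_pointwise (beta lam : ℝ) (hb0 : 0 < beta) (hb1 : beta < 1)
    (hl0 : 0 ≤ lam) (hl1 : lam < 1) {f : ℂ → ℂ} (hf : IsInF lam beta f) :
    ∀ ζ ∈ Metric.ball (0:ℂ) 1,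
      ‖deriv (deriv f) ζ / deriv f ζ - cval ζ lam beta‖ ≤ rval ζ lam beta := by
  obtain ⟨hdf, hf0, hf'0, hf''0, hfne, hfRe⟩ := hf
  have hhd : DifferentiableOn ℂ (fun ζ => deriv (deriv f) ζ / deriv f ζ) (Metric.ball (0:ℂ) 1) :=
    isInF_diffOn ⟨hdf, hf0, hf'0, hf''0, hfne, hfRe⟩
  rw [unitDisk_eq] at hdf hfne hfRe
  set D : Set ℂ := Metric.ball (0:ℂ) 1 with hD_def
  set h : ℂ → ℂ := fun ζ => deriv (deriv f) ζ / deriv f ζ with hh_def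
  have hopen : IsOpen D := isOpen_ball
  have h0mem : (0:ℂ) ∈ D := mem_ball_self one_pos
  have hh0 : h 0 = 2 * (lam:ℂ) * (1 - (beta:ℂ)) := by
    rw [hh_def]; simp only [hf'0, hf''0, div_one]
  have hRe : ∀ ζ ∈ D, beta < (1 + ζ * h ζ).re := by
    intro ζ hζ
    have := hfRe ζ hζ
    rwa [mul_div_assoc] at this
  have hbC : (1:ℂ) - (beta:ℂ) ≠ 0 := by
    intro H
    have := congrArg Complex.re H
    simp at this
    linarith
  -- the function p
  set p : ℂ → ℂ := fun ζ => (1 + ζ * h ζ - (beta:ℂ)) / (1 - (beta:ℂ)) with hp_def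
  have hpd : DifferentiableOn ℂ p D := by
    apply DifferentiableOn.div_const
    exact (differentiableOn_const _ |>.add (differentiableOn_id.mul hhd)).sub
      (differentiableOn_const _)
  have hpRe : ∀ ζ ∈ D, 0 < (p ζ).re := by
    intro ζ hζ
    have h1 : ((1:ℂ) - (beta:ℂ)) = ((1 - beta : ℝ) : ℂ) := by push_cast; ring
    rw [hp_def]
    simp only [h1, Complex.div_ofReal_re]
    apply div_pos
    · have := hRe ζ hζ
      have h2 : (1 + ζ * h ζ - (beta:ℂ)).re = (1 + ζ * h ζ).re - beta := by
        simp [Complex.sub_re, Complex.ofReal_re]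
      rw [h2]; linarith
    · linarith
  have hp0 : p 0 = 1 := by
    rw [hp_def]
    simp only [zero_mul, add_zero]
    exact div_self hbC
  have hp1 : ∀ ζ ∈ D, p ζ + 1 ≠ 0 := by
    intro ζ hζ H
    have h1 := hpRe ζ hζ
    have := congrArg Complex.re H
    simp only [Complex.add_re, Complex.one_re, Complex.zero_re] at this
    linarith
  -- the function q
  set q : ℂ → ℂ := fun ζ => (p ζ - 1) / (p ζ + 1) with hq_def
  have hqd : DifferentiableOn ℂ q D :=
    (hpd.sub (differentiableOn_const _)).div (hpd.add (differentiableOn_const _)) hp1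
  have hq0 : q 0 = 0 := by rw [hq_def]; simp [hp0]
  have hqlt : ∀ ζ ∈ D, ‖q ζ‖ < 1 := by
    intro ζ hζ
    have h1 := hpRe ζ hζ
    have hne := hp1 ζ hζ
    rw [hq_def]
    simp only [norm_div]
    rw [div_lt_one (norm_pos_iff.mpr hne)]
    have hsq : ‖p ζ - 1‖ ^ 2 < ‖p ζ + 1‖ ^ 2 := by
      rw [Complex.sq_norm, Complex.sq_norm,
        Complex.normSq_apply, Complex.normSq_apply]
      simp only [Complex.sub_re, Complex.sub_im, Complex.add_re, Complex.add_im,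
        Complex.one_re, Complex.one_im]
      nlinarith
    nlinarith [norm_nonneg (p ζ - 1), norm_nonneg (p ζ + 1)]
  have hqmaps : MapsTo q D (Metric.ball (q 0) 1) := by
    intro ζ hζ
    rw [hq0]
    exact mem_ball_zero_iff.mpr (hqlt ζ hζ)
  -- the function w
  set w : ℂ → ℂ := dslope q 0 with hw_def
  have hwd : DifferentiableOn ℂ w D :=
    (Complex.differentiableOn_dslope (hopen.mem_nhds h0mem)).mpr hqd
  have hwle : ∀ ζ ∈ D, ‖w ζ‖ ≤ 1 := by
    intro ζ hζ
    have := Complex.norm_dslope_le_div_of_mapsTo_ball hqd (hqmaps.mono_right ball_subset_closedBall) hζ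
    simpa using this
  have hqw : ∀ ζ, q ζ = ζ * w ζ := by
    intro ζ
    rcases eq_or_ne ζ 0 with rfl | hne
    · simp [hq0]
    · rw [hw_def, dslope_of_ne _ hne, slope_def_field, hq0]
      field_simp
      ring
  -- derivative of q at 0 equals lam
  have hh0' : DifferentiableAt ℂ h 0 := hhd.differentiableAt (hopen.mem_nhds h0mem)
  have hzh : HasDerivAt (fun ζ : ℂ => ζ * h ζ) (h 0) 0 := by
    have := (hasDerivAt_id (0:ℂ)).fun_mul hh0'.hasDerivAt
    simpa using this
  have hp' : HasDerivAt p (h 0 / (1 - (beta:ℂ))) 0 := by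
    have h1 : HasDerivAt (fun ζ : ℂ => 1 + ζ * h ζ - (beta:ℂ)) (h 0) 0 :=
      (hzh.const_add 1).sub_const _
    exact h1.div_const _
  have hq' : HasDerivAt q ((lam:ℝ):ℂ) 0 := by
    have h2 : p 0 + 1 ≠ 0 := by rw [hp0]; norm_num
    have := (hp'.sub_const 1).div (hp'.add_const 1) h2
    have heq : ((h 0 / (1 - (beta:ℂ))) * (p 0 + 1) - (p 0 - 1) * (h 0 / (1 - (beta:ℂ))))
        / (p 0 + 1) ^ 2 = ((lam:ℝ):ℂ) := by
      rw [hp0, hh0]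
      field_simp
      ring
    rw [heq] at this
    exact this
  have hw0 : w 0 = (lam:ℂ) := by rw [hw_def, dslope_same]; exact hq'.deriv
  -- strict bound on w
  have hwlt : ∀ ζ ∈ D, ‖w ζ‖ < 1 := by
    intro ζ hζ
    by_contra hcon
    push_neg at hcon
    have heq : ‖w ζ‖ = 1 := le_antisymm (hwle ζ hζ) hcon
    have hmax : IsMaxOn (norm ∘ w) D ζ := by
      intro x hx
      simp only [Function.comp_apply, Set.mem_setOf_eq, heq]
      exact (hwle x hx)
    have hEq := Complex.eqOn_of_isPreconnected_of_isMaxOn_norm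
      (convex_ball (0:ℂ) 1).isPreconnected hopen hwd hζ hmax
    have h01 : w 0 = w ζ := hEq h0mem
    rw [hw0] at h01
    rw [← h01] at heq
    rw [Complex.norm_real, Real.norm_eq_abs, _root_.abs_of_nonneg hl0] at heq
    linarith
  -- the function g
  set g : ℂ → ℂ := fun ζ => (w ζ - (lam:ℂ)) / (1 - (lam:ℂ) * w ζ) with hg_def
  have hgden : ∀ ζ ∈ D, (1 - (lam:ℂ) * w ζ) ≠ 0 := by
    intro ζ hζ H
    have hn : ‖(lam:ℂ) * w ζ‖ < 1 := by
      rw [norm_mul, Complex.norm_real, Real.norm_eq_abs, _root_.abs_of_nonneg hl0]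
      nlinarith [hwle ζ hζ, norm_nonneg (w ζ)]
    have h2 : (lam:ℂ) * w ζ = 1 := by linear_combination -H
    rw [h2] at hn
    simp at hn
  have hgd : DifferentiableOn ℂ g D :=
    (hwd.sub (differentiableOn_const _)).div
      ((differentiableOn_const _).sub ((differentiableOn_const _).mul hwd)) hgden
  have hg0 : g 0 = 0 := by rw [hg_def]; simp [hw0]
  have hglt : ∀ ζ ∈ D, ‖g ζ‖ < 1 := by
    intro ζ hζ
    rw [hg_def]
    simp only [norm_div]
    rw [div_lt_one (norm_pos_iff.mpr (hgden ζ hζ))]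
    have hw2 : Complex.normSq (w ζ) < 1 := by
      rw [Complex.normSq_eq_norm_sq]
      nlinarith [hwlt ζ hζ, norm_nonneg (w ζ)]
    have hsq : ‖w ζ - (lam:ℂ)‖ ^ 2 < ‖1 - (lam:ℂ) * w ζ‖ ^ 2 := by
      rw [Complex.sq_norm, Complex.sq_norm,
        Complex.normSq_apply, Complex.normSq_apply]
      have hw2' : (w ζ).re ^ 2 + (w ζ).im ^ 2 < 1 := by
        have : Complex.normSq (w ζ) = (w ζ).re ^ 2 + (w ζ).im ^ 2 := by
          rw [Complex.normSq_apply]; ring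
        linarith [hw2, this.symm.trans_lt hw2]
      simp only [Complex.sub_re, Complex.sub_im, Complex.mul_re, Complex.mul_im,
        Complex.ofReal_re, Complex.ofReal_im, Complex.one_re, Complex.one_im]
      nlinarith [mul_pos (show (0:ℝ) < 1 - lam ^ 2 by nlinarith)
        (show (0:ℝ) < 1 - (w ζ).re ^ 2 - (w ζ).im ^ 2 by linarith)]
    nlinarith [norm_nonneg (w ζ - (lam:ℂ)), norm_nonneg (1 - (lam:ℂ) * w ζ)]
  have hgmaps : MapsTo g D (Metric.ball (0:ℂ) 1) := fun ζ hζ =>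
    mem_ball_zero_iff.mpr (hglt ζ hζ)
  have hgle : ∀ ζ ∈ D, ‖g ζ‖ ≤ ‖ζ‖ := by
    intro ζ hζ
    have := Complex.dist_le_dist_of_mapsTo_ball hgd
      (by rw [hg0]; exact hgmaps.mono_right ball_subset_closedBall) hζ
    simpa [dist_zero_right, hg0] using this
  -- now the main bound
  intro ζ hζ
  have hζ1 : ‖ζ‖ < 1 := mem_ball_zero_iff.mp hζ
  have hrel : w ζ * (1 + (lam:ℂ) * g ζ) = g ζ + (lam:ℂ) := by
    have hgrel : g ζ * (1 - (lam:ℂ) * w ζ) = w ζ - (lam:ℂ) := by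
      rw [hg_def]
      exact div_mul_cancel₀ _ (hgden ζ hζ)
    linear_combination -hgrel
  have hT : h ζ * (1 - ζ * w ζ) = 2 * (1 - (beta:ℂ)) * w ζ := by
    rcases eq_or_ne ζ 0 with rfl | hne
    · rw [hh0, hw0]; ring
    · have hq_rel : ζ * w ζ * (p ζ + 1) = p ζ - 1 := by
        rw [← hqw ζ, hq_def]
        exact div_mul_cancel₀ _ (hp1 ζ hζ)
      have hp_rel : p ζ * (1 - (beta:ℂ)) = 1 + ζ * h ζ - (beta:ℂ) := by
        rw [hp_def]
        exact div_mul_cancel₀ _ hbC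
      have hmul : ζ * (h ζ * (1 - ζ * w ζ)) = ζ * (2 * (1 - (beta:ℂ)) * w ζ) := by
        linear_combination (-(1 - (beta:ℂ))) * hq_rel + (-(1 - ζ * w ζ)) * hp_rel
      exact mul_left_cancel₀ hne hmul
  exact mobius_disk_bound beta lam hb0 hb1 hl0 hl1 ζ (g ζ) (w ζ) (h ζ)
    hζ1 (hgle ζ hζ) (hwlt ζ hζ) hrel hT


lemma cval_continuousOn (lam beta : ℝ) (hl0 : 0 ≤ lam) (hl1 : lam < 1) :
    ContinuousOn (fun ζ => cval ζ lam beta) (Metric.ball (0:ℂ) 1) := by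
  apply ContinuousOn.div
  · exact (continuous_const.mul
      ((Complex.continuous_ofReal.comp
          (continuous_const.mul (continuous_const.sub (continuous_norm.pow 2)))).add
        ((Complex.continuous_ofReal.comp
            ((continuous_norm.pow 2).sub continuous_const)).mul
          Complex.continuous_conj))).continuousOn
  · exact (Complex.continuous_ofReal.comp
      ((continuous_const.sub (continuous_norm.pow 2)).mul
        ((continuous_const.sub (continuous_const.mul Complex.continuous_re)).add
          (continuous_norm.pow 2)))).continuousOn
  · intro ζ hζ
    exact Complex.ofReal_ne_zero.mpr (denom_pos lam hl0 hl1 ζ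
      (by exact mem_ball_zero_iff.mp hζ)).ne'


lemma rval_continuousOn (lam beta : ℝ) (hl0 : 0 ≤ lam) (hl1 : lam < 1) :
    ContinuousOn (fun ζ => rval ζ lam beta) (Metric.ball (0:ℂ) 1) := by
  apply ContinuousOn.div
  · exact (continuous_const.mul continuous_norm).continuousOn
  · exact ((continuous_const.sub (continuous_norm.pow 2)).mul
      ((continuous_const.sub (continuous_const.mul Complex.continuous_re)).add
        (continuous_norm.pow 2))).continuousOn
  · intro ζ hζ
    exact (denom_pos lam hl0 hl1 ζ
      (by exact mem_ball_zero_iff.mp hζ)).ne'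


/-- for a `C¹` curve `γ : z(t)`, `0 ≤ t ≤ 1`, in `D` with `z(0)=0`,
`z(1)=z0`, the set `V(z0,λ,β)` is contained in the closed disk with center
`C(λ,γ,β) = ∫_0^1 c(z(t),λ,β) z'(t) dt` and radius `R(λ,γ,β) = ∫_0^1 r(z(t),λ,β) |z'(t)| dt`. -/
theorem V_subset_closedBall (beta lam : ℝ) (hbeta : 0 < beta ∧ beta < 1)
    (hlam : 0 ≤ lam ∧ lam < 1) (z0 : ℂ) (hz0 : z0 ∈ unitDisk)
    (z : ℝ → ℂ) (hz : ContDiffOn ℝ 1 z (Set.Icc 0 1))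
    (hmem : ∀ t ∈ Set.Icc (0:ℝ) 1, z t ∈ unitDisk)
    (h0 : z 0 = 0) (h1 : z 1 = z0) :
    V z0 lam beta ⊆
      Metric.closedBall
        (∫ t in (0:ℝ)..1, cval (z t) lam beta * derivWithin z (Set.Icc 0 1) t)
        (∫ t in (0:ℝ)..1, rval (z t) lam beta * ‖derivWithin z (Set.Icc 0 1) t‖) := by
  obtain ⟨hb0, hb1⟩ := hbeta
  obtain ⟨hl0, hl1⟩ := hlam
  intro W hW
  obtain ⟨f, hfF, rfl⟩ := hW
  have hmem' : ∀ t ∈ Set.Icc (0:ℝ) 1, z t ∈ Metric.ball (0:ℂ) 1 := by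
    intro t ht
    have := hmem t ht
    rwa [unitDisk_eq] at this
  have hhd : DifferentiableOn ℂ (fun ζ => deriv (deriv f) ζ / deriv f ζ)
      (Metric.ball (0:ℂ) 1) := isInF_diffOn hfF
  set h : ℂ → ℂ := fun ζ => deriv (deriv f) ζ / deriv f ζ with hh_def
  have hlog : logDerivAt f z0 = ∫ t in (0:ℝ)..1, h (z t) * derivWithin z (Set.Icc 0 1) t := by
    rw [logDerivAt, ← h1]
    exact (integral_curve_eq_segInt hhd hz hmem' h0).symm
  have hkey := key_pointwise beta lam hb0 hb1 hl0 hl1 hfF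
  have hzc : ContinuousOn z (Set.Icc 0 1) := hz.continuousOn
  have hz'c : ContinuousOn (fun t => derivWithin z (Set.Icc 0 1) t) (Set.Icc 0 1) :=
    hz.continuousOn_derivWithin (uniqueDiffOn_Icc one_pos) le_rfl
  have hIh : IntervalIntegrable (fun t => h (z t) * derivWithin z (Set.Icc 0 1) t) volume 0 1 := by
    apply ContinuousOn.intervalIntegrable
    rw [Set.uIcc_of_le zero_le_one]
    exact (hhd.continuousOn.comp hzc hmem').mul hz'c
  have hIc : IntervalIntegrable (fun t => cval (z t) lam beta * derivWithin z (Set.Icc 0 1) t)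
      volume 0 1 := by
    apply ContinuousOn.intervalIntegrable
    rw [Set.uIcc_of_le zero_le_one]
    exact ((cval_continuousOn lam beta hl0 hl1).comp hzc hmem').mul hz'c
  have hIr : IntervalIntegrable
      (fun t => rval (z t) lam beta * ‖derivWithin z (Set.Icc 0 1) t‖) volume 0 1 := by
    apply ContinuousOn.intervalIntegrable
    rw [Set.uIcc_of_le zero_le_one]
    refine ((rval_continuousOn lam beta hl0 hl1).comp hzc hmem').mul ?_
    exact continuous_norm.comp_continuousOn hz'c
  have hInorm : IntervalIntegrable
      (fun t => ‖(h (z t) - cval (z t) lam beta) * derivWithin z (Set.Icc 0 1) t‖) volume 0 1 := by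
    apply ContinuousOn.intervalIntegrable
    rw [Set.uIcc_of_le zero_le_one]
    apply ContinuousOn.norm
    exact ((hhd.continuousOn.comp hzc hmem').sub
      ((cval_continuousOn lam beta hl0 hl1).comp hzc hmem')).mul hz'c
  rw [Metric.mem_closedBall, dist_eq_norm, hlog, ← intervalIntegral.integral_sub hIh hIc]
  simp only [← sub_mul]
  calc ‖∫ t in (0:ℝ)..1, (h (z t) - cval (z t) lam beta) * derivWithin z (Set.Icc 0 1) t‖
      ≤ ∫ t in (0:ℝ)..1, ‖(h (z t) - cval (z t) lam beta) * derivWithin z (Set.Icc 0 1) t‖ :=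
        intervalIntegral.norm_integral_le_integral_norm zero_le_one
    _ ≤ ∫ t in (0:ℝ)..1, rval (z t) lam beta * ‖derivWithin z (Set.Icc 0 1) t‖ := by
        apply intervalIntegral.integral_mono_on zero_le_one hInorm hIr
        intro t ht
        rw [norm_mul]
        exact mul_le_mul_of_nonneg_right (hkey (z t) (hmem' t ht)) (norm_nonneg _)
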